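/- Gap property of the spectrum: under the asymptotics λ_n^j = -ω_j + i β_j n + O(1/|n|) with ω_1, ω_2, ω_3 distinct reals and β_1, β_2, β_3 distinct nonzero reals, and assuming all λ_n^j are pairwise distinct, there exists Ĉ > 0 such that |λ_n^j - λ_k^l| ≥ Ĉ for all (n,j) ≠ (k,l) in ℤ* × {1,2,3}. -/

import Mathlib

/-- Gap property of the spectrum. -/
theorem stmt_14 (ω β : Fin 3 → ℝ)
    (hωdist : Function.Injective ω)
    (hβdist : Function.Injective β) (hβne : ∀ j, β j ≠ 0)
    (lam : ℤ → Fin 3 → ℂ)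
    (hdist : ∀ n k : ℤ, ∀ j l : Fin 3, n ≠ 0 → k ≠ 0 → (n, j) ≠ (k, l) →
      lam n j ≠ lam k l)
    (hasymp : ∃ C : ℝ, ∃ N : ℕ, ∀ n : ℤ, n ≠ 0 → (N : ℤ) < |n| → ∀ j : Fin 3,
      ‖lam n j - ((-(ω j) : ℂ) + Complex.I * (β j) * n)‖ ≤ C / |(n : ℝ)|) :
    ∃ Cgap : ℝ, 0 < Cgap ∧ ∀ n k : ℤ, ∀ j l : Fin 3, n ≠ 0 → k ≠ 0 → (n, j) ≠ (k, l) →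
      Cgap ≤ ‖lam n j - lam k l‖ := by
  obtain ⟨C, N, hC⟩ := hasymp
  set A : ℤ → Fin 3 → ℂ := fun n j => (-(ω j) : ℂ) + Complex.I * (β j) * n with hAdef
  set C' : ℝ := max C 0 with hC'def
  have hC'0 : 0 ≤ C' := le_max_right _ _
  have hCC' : C ≤ C' := le_max_left _ _
  -- components of A
  have hAre : ∀ (n : ℤ) (j : Fin 3), (A n j).re = -(ω j) := by
    intro n j; simp [hAdef]
  have hAim : ∀ (n : ℤ) (j : Fin 3), (A n j).im = β j * (n : ℝ) := by
    intro n j; simp [hAdef]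
  -- minimal gaps
  have hne3 : (Finset.univ : Finset (Fin 3)).Nonempty := ⟨0, Finset.mem_univ 0⟩
  set δβ : ℝ := Finset.inf' Finset.univ hne3 (fun j => |β j|) with hδβdef
  have hδβpos : 0 < δβ := by
    rw [hδβdef, Finset.lt_inf'_iff]
    exact fun j _ => abs_pos.mpr (hβne j)
  have hδβle : ∀ j, δβ ≤ |β j| := by
    intro j; rw [hδβdef]; exact Finset.inf'_le _ (Finset.mem_univ j)
  have hPωne : ((Finset.univ : Finset (Fin 3 × Fin 3)).filter
      fun p : Fin 3 × Fin 3 => p.1 ≠ p.2).Nonempty := ⟨(0, 1), by simp⟩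
  set δω : ℝ := Finset.inf' _ hPωne (fun p => |ω p.1 - ω p.2|) with hδωdef
  have hδωpos : 0 < δω := by
    rw [hδωdef, Finset.lt_inf'_iff]
    rintro ⟨a, b⟩ hab
    simp only [Finset.mem_filter] at hab
    exact abs_pos.mpr (sub_ne_zero.mpr fun h => hab.2 (hωdist h))
  have hδωle : ∀ a b : Fin 3, a ≠ b → δω ≤ |ω a - ω b| := by
    intro a b h
    rw [hδωdef]
    exact Finset.inf'_le (b := (a, b)) _ (by simp [h])
  set δ : ℝ := min δω δβ with hδdef
  have hδpos : 0 < δ := lt_min hδωpos hδβpos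
  -- the threshold M
  set M : ℕ := N + 1 + ⌈4 * C' / δ⌉₊ with hMdef
  have hMN : (N : ℤ) < (M : ℤ) := by exact_mod_cast (by omega : N < M)
  have hM1 : 1 ≤ M := by omega
  have hMpos : (0 : ℝ) < (M : ℝ) := by exact_mod_cast Nat.pos_of_ne_zero (by omega)
  have hCM : C' / (M : ℝ) ≤ δ / 4 := by
    have h1 : 4 * C' / δ ≤ (M : ℝ) :=
      (Nat.le_ceil _).trans (Nat.cast_le.mpr (by omega))
    rw [div_le_iff₀ hδpos] at h1
    rw [div_le_iff₀ hMpos]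
    nlinarith
  -- uniform error bound beyond M
  have herrM : ∀ n : ℤ, n ≠ 0 → (M : ℤ) ≤ |n| → ∀ j, ‖lam n j - A n j‖ ≤ C' / (M : ℝ) := by
    intro n hn0 hnM j
    have hNn : (N : ℤ) < |n| := lt_of_lt_of_le hMN hnM
    have h1 := hC n hn0 hNn j
    have hnr : (M : ℝ) ≤ |(n : ℝ)| := by
      rw [← Int.cast_abs]; exact_mod_cast hnM
    exact h1.trans (div_le_div₀ hC'0 hCC' hMpos hnr)
  -- bound on small lam values
  have hBne : ((Finset.Icc (-(M : ℤ)) (M : ℤ)) ×ˢ (Finset.univ : Finset (Fin 3))).Nonempty :=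
    ⟨(0, 0), by simp [Finset.mem_Icc]⟩
  set B : ℝ := Finset.sup' _ hBne (fun p => ‖lam p.1 p.2‖) with hBdef
  have hBle : ∀ (k : ℤ) (l : Fin 3), |k| ≤ (M : ℤ) → ‖lam k l‖ ≤ B := by
    intro k l hk
    rw [hBdef]
    refine Finset.le_sup' (f := fun p : ℤ × Fin 3 => ‖lam p.1 p.2‖) (b := (k, l)) ?_
    simp only [Finset.mem_product, Finset.mem_Icc, Finset.mem_univ, and_true]
    exact abs_le.mp hk
  have hB0 : 0 ≤ B := le_trans (norm_nonneg _) (hBle 0 0 (by simp))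
  -- the second threshold M'
  set M' : ℕ := M + 1 + ⌈(B + 1 + C') / δβ⌉₊ with hM'def
  have hMM' : M ≤ M' := by omega
  have hM'1 : (1 : ℤ) ≤ (M' : ℤ) := by exact_mod_cast (by omega : 1 ≤ M')
  -- lam is large beyond M'
  have hlamlarge : ∀ (n : ℤ) (j : Fin 3), (M' : ℤ) < |n| → B + 1 ≤ ‖lam n j‖ := by
    intro n j hn
    have hn0 : n ≠ 0 := by
      intro h; rw [h] at hn; simp at hn; omega
    have hnM : (M : ℤ) ≤ |n| := by
      have : (M : ℤ) ≤ (M' : ℤ) := by exact_mod_cast hMM'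
      omega
    have herr := herrM n hn0 hnM j
    have him : |β j * (n : ℝ)| ≤ ‖A n j‖ := by
      have h := Complex.abs_im_le_norm (A n j)
      rw [hAim] at h
      simpa using h
    have hnr : ((M' : ℝ) + 1) ≤ |(n : ℝ)| := by
      rw [← Int.cast_abs]
      exact_mod_cast (by omega : (M' : ℤ) + 1 ≤ |n|)
    have hx : (B + 1 + C') / δβ ≤ |(n : ℝ)| := by
      refine le_trans ?_ hnr
      refine (Nat.le_ceil _).trans ?_
      have : ((⌈(B + 1 + C') / δβ⌉₊ : ℕ) : ℝ) ≤ (M' : ℝ) := Nat.cast_le.mpr (by omega)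
      linarith
    have hbig : B + 1 + C' ≤ |β j| * |(n : ℝ)| := by
      rw [div_le_iff₀ hδβpos] at hx
      have := mul_le_mul_of_nonneg_right (hδβle j) (abs_nonneg (n : ℝ))
      nlinarith
    have htri : ‖A n j‖ - ‖lam n j - A n j‖ ≤ ‖lam n j‖ := by
      have := norm_sub_norm_le (A n j) (lam n j)
      rw [norm_sub_rev] at this
      linarith
    have hCMC : C' / (M : ℝ) ≤ C' := by
      rw [div_le_iff₀ hMpos]
      nlinarith [hMpos, (by exact_mod_cast hM1 : (1:ℝ) ≤ (M:ℝ))]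
    rw [abs_mul] at him
    linarith
  -- the finite minimum
  set S : Finset (ℤ × Fin 3) :=
    ((Finset.Icc (-(M' : ℤ)) (M' : ℤ)).erase 0) ×ˢ (Finset.univ : Finset (Fin 3)) with hSdef
  have hmemS : ∀ (n : ℤ) (j : Fin 3), n ≠ 0 → |n| ≤ (M' : ℤ) → (n, j) ∈ S := by
    intro n j hn0 hn
    simp only [hSdef, Finset.mem_product, Finset.mem_erase, Finset.mem_Icc]
    have h2 := abs_le.mp hn
    exact ⟨⟨hn0, h2.1, h2.2⟩, Finset.mem_univ _⟩
  set P : Finset ((ℤ × Fin 3) × (ℤ × Fin 3)) :=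
    (S ×ˢ S).filter (fun q => q.1 ≠ q.2) with hPdef
  have hPne : P.Nonempty := by
    refine ⟨((1, 0), (1, 1)), ?_⟩
    simp only [hPdef, Finset.mem_filter, Finset.mem_product]
    refine ⟨⟨hmemS 1 0 one_ne_zero (by simpa using hM'1), hmemS 1 1 one_ne_zero (by simpa using hM'1)⟩, ?_⟩
    simp
  set ε : ℝ := P.inf' hPne (fun q => ‖lam q.1.1 q.1.2 - lam q.2.1 q.2.2‖) with hεdef
  have hεpos : 0 < ε := by
    rw [hεdef, Finset.lt_inf'_iff]
    rintro ⟨⟨a, b⟩, ⟨c, d⟩⟩ hq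
    simp only [hPdef, Finset.mem_filter, Finset.mem_product, hSdef, Finset.mem_erase,
      Finset.mem_Icc] at hq
    have := hdist a c b d hq.1.1.1.1 hq.1.2.1.1 hq.2
    simpa [norm_pos_iff, sub_ne_zero] using this
  have hεle : ∀ (n k : ℤ) (j l : Fin 3), n ≠ 0 → k ≠ 0 → (n, j) ≠ (k, l) →
      |n| ≤ (M' : ℤ) → |k| ≤ (M' : ℤ) → ε ≤ ‖lam n j - lam k l‖ := by
    intro n k j l hn0 hk0 hne hn hk
    rw [hεdef]
    refine Finset.inf'_le
      (f := fun q : (ℤ × Fin 3) × (ℤ × Fin 3) => ‖lam q.1.1 q.1.2 - lam q.2.1 q.2.2‖)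
      (b := ((n, j), (k, l))) ?_
    simp only [hPdef, Finset.mem_filter, Finset.mem_product]
    exact ⟨⟨hmemS n j hn0 hn, hmemS k l hk0 hk⟩, hne⟩
  -- large-large case
  have hLL : ∀ (n k : ℤ) (j l : Fin 3), n ≠ 0 → k ≠ 0 → (n, j) ≠ (k, l) →
      (M : ℤ) ≤ |n| → (M : ℤ) ≤ |k| → δ / 2 ≤ ‖lam n j - lam k l‖ := by
    intro n k j l hn0 hk0 hne hn hk
    have hen := (herrM n hn0 hn j).trans hCM
    have hek := (herrM k hk0 hk l).trans hCM
    have hD : δ ≤ ‖A n j - A k l‖ := by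
      by_cases hjl : j = l
      · subst hjl
        have hnk : n ≠ k := fun h => hne (by rw [h])
        have him : |(A n j - A k j).im| ≤ ‖A n j - A k j‖ := by
          simpa using Complex.abs_im_le_norm (A n j - A k j)
        rw [Complex.sub_im, hAim, hAim] at him
        have h1 : (1 : ℝ) ≤ |(n : ℝ) - (k : ℝ)| := by
          have : (1 : ℤ) ≤ |n - k| := Int.one_le_abs (sub_ne_zero.mpr hnk)
          rw [show ((n:ℝ) - (k:ℝ)) = ((n - k : ℤ) : ℝ) by push_cast; ring, ← Int.cast_abs]
          exact_mod_cast this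
        have h2 : δβ ≤ |β j * (n : ℝ) - β j * (k : ℝ)| := by
          rw [← mul_sub, abs_mul]
          nlinarith [hδβle j, abs_nonneg (β j), hδβpos]
        have : δ ≤ δβ := min_le_right _ _
        linarith
      · have hre : |(A n j - A k l).re| ≤ ‖A n j - A k l‖ := by
          simpa using Complex.abs_re_le_norm (A n j - A k l)
        rw [Complex.sub_re, hAre, hAre] at hre
        have h2 : δω ≤ |(-(ω j)) - (-(ω l))| := by
          rw [show (-(ω j)) - (-(ω l)) = -(ω j - ω l) by ring, abs_neg]
          exact hδωle j l hjl
        have : δ ≤ δω := min_le_left _ _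
        linarith
    have key : A n j - A k l = (lam n j - lam k l) - (lam n j - A n j) + (lam k l - A k l) := by
      ring
    have htri : ‖A n j - A k l‖ ≤ ‖lam n j - lam k l‖ + ‖lam n j - A n j‖ + ‖lam k l - A k l‖ := by
      rw [key]
      calc ‖lam n j - lam k l - (lam n j - A n j) + (lam k l - A k l)‖
          ≤ ‖lam n j - lam k l - (lam n j - A n j)‖ + ‖lam k l - A k l‖ := norm_add_le _ _
        _ ≤ ‖lam n j - lam k l‖ + ‖lam n j - A n j‖ + ‖lam k l - A k l‖ := by
            have := norm_sub_le (lam n j - lam k l) (lam n j - A n j)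
            linarith
    linarith
  -- far case
  have hFar : ∀ (n k : ℤ) (j l : Fin 3), (M' : ℤ) < |n| → |k| ≤ (M : ℤ) →
      1 ≤ ‖lam n j - lam k l‖ := by
    intro n k j l hn hk
    have h1 := hlamlarge n j hn
    have h2 := hBle k l hk
    have := norm_sub_norm_le (lam n j) (lam k l)
    linarith
  -- combine
  refine ⟨min (min (δ / 2) 1) ε, lt_min (lt_min (by linarith) one_pos) hεpos, ?_⟩
  have main : ∀ (n k : ℤ) (j l : Fin 3), n ≠ 0 → k ≠ 0 → (n, j) ≠ (k, l) →
      |k| ≤ (M : ℤ) → min (min (δ / 2) 1) ε ≤ ‖lam n j - lam k l‖ := by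
    intro n k j l hn0 hk0 hne hk
    rcases le_or_gt |n| (M' : ℤ) with hn | hn
    · have hkM' : |k| ≤ (M' : ℤ) := le_trans hk (by exact_mod_cast hMM')
      exact le_trans (min_le_right _ _) (hεle n k j l hn0 hk0 hne hn hkM')
    · exact le_trans (le_trans (min_le_left _ _) (min_le_right _ _)) (hFar n k j l hn hk)
  intro n k j l hn0 hk0 hne
  rcases le_or_gt |n| (M : ℤ) with hn | hn
  · rw [norm_sub_rev]
    exact main k n l j hk0 hn0 (Ne.symm hne) hn
  · rcases le_or_gt |k| (M : ℤ) with hk | hk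
    · exact main n k j l hn0 hk0 hne hk
    · exact le_trans (le_trans (min_le_left _ _) (min_le_left _ _))
        (hLL n k j l hn0 hk0 hne hn.le hk.le)
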